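/- Let α > −1/2 and 0 < γ < α + 1/2. Then for every t ∈ ℝ, (1/Γ(α−γ+1)) ∑_{k∈ℕ} (−1)^k binom(α+1, k) (t−k)_+^{α−γ} = ∑_{j∈ℕ} (−1)^j binom(γ, j) B_{α−γ}(t−j); that is, the fractional derivative of the fractional B-spline of degree α satisfies D^γ B_α = Δ^γ B_{α−γ}, a fractional spline of degree α − γ. All sums involved have only finitely many nonzero terms for fixed t, since the truncated powers vanish for negative argument. -/

import Mathlib

/-- Generalized binomial coefficient: binom(x, k) = (∏_{i=0}^{k-1} (x - i)) / k!. -/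
noncomputable def gbinom (x : ℝ) (k : ℕ) : ℝ :=
  (∏ i ∈ Finset.range k, (x - i)) / k.factorial

/-- Fractional truncated power: t_+^α := t^α for t > 0 and 0 for t ≤ 0. -/
noncomputable def tpow (t α : ℝ) : ℝ := if 0 < t then t ^ α else 0

/-- Fractional B-spline of degree α:
B_α(t) := (1/Γ(α+1)) ∑_{k∈ℕ} (−1)^k binom(α+1, k) (t−k)_+^α. -/
noncomputable def fracBspline (α : ℝ) (t : ℝ) : ℝ :=
  (1 / Real.Gamma (α + 1)) * ∑' k : ℕ, (-1 : ℝ) ^ k * gbinom (α + 1) k * tpow (t - k) α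

lemma gbinom_eq_choose (x : ℝ) (k : ℕ) : gbinom x k = Ring.choose x k := by
  have h : (descPochhammer ℤ k).smeval x = ∏ i ∈ Finset.range k, (x - i) := by
    induction k with
    | zero => simp [descPochhammer_zero, Polynomial.smeval_one]
    | succ n ih =>
        rw [descPochhammer_succ_right, Polynomial.smeval_mul, ih, Finset.prod_range_succ]
        congr 1
        simp [Polynomial.smeval_sub, Polynomial.smeval_X, Polynomial.smeval_natCast]
  have h2 := Ring.descPochhammer_eq_factorial_smul_choose x k
  rw [h] at h2
  rw [gbinom, h2, nsmul_eq_mul]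
  field_simp [Nat.factorial_ne_zero]

lemma gbinom_vandermonde (x y : ℝ) (k : ℕ) :
    gbinom (x + y) k = ∑ ij ∈ Finset.HasAntidiagonal.antidiagonal k, gbinom x ij.1 * gbinom y ij.2 := by
  simp only [gbinom_eq_choose]
  exact Ring.add_choose_eq k (Commute.all x y)

lemma tpow_eq_zero {s : ℝ} (h : s ≤ 0) (β : ℝ) : tpow s β = 0 := if_neg (not_lt.mpr h)

/-- The fractional derivative of the fractional B-spline of degree α satisfies
D^γ B_α = Δ^γ B_{α−γ}, a fractional spline of degree α − γ. -/
theorem fracDeriv_fracBspline_eq_gdiff (α γ : ℝ) (hα : -(1/2) < α)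
    (hγ0 : 0 < γ) (hγ : γ < α + 1/2) (t : ℝ) :
    (1 / Real.Gamma (α - γ + 1)) *
        ∑' k : ℕ, (-1 : ℝ) ^ k * gbinom (α + 1) k * tpow (t - k) (α - γ)
      = ∑' j : ℕ, (-1 : ℝ) ^ j * gbinom γ j * fracBspline (α - γ) (t - j) := by
  set β := α - γ with hβ
  set N := ⌈t⌉₊ with hN
  have htN : t ≤ N := Nat.le_ceil t
  have hz : ∀ (n : ℕ), N ≤ n → ∀ s : ℝ, (n : ℝ) ≤ s → tpow (t - s) β = 0 := by
    intro n hn s hs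
    refine tpow_eq_zero ?_ _
    have : (N : ℝ) ≤ n := Nat.cast_le.mpr hn
    linarith
  have hL : (∑' k : ℕ, (-1 : ℝ) ^ k * gbinom (α + 1) k * tpow (t - k) β)
      = ∑ k ∈ Finset.range N, (-1 : ℝ) ^ k * gbinom (α + 1) k * tpow (t - k) β := by
    refine tsum_eq_sum ?_
    intro b hb
    have hb' : N ≤ b := le_of_not_gt (fun h => hb (Finset.mem_range.mpr h))
    rw [hz b hb' b le_rfl]
    ring
  have hInner : ∀ j : ℕ, fracBspline β (t - j)
      = (1 / Real.Gamma (β + 1)) *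
        ∑ i ∈ Finset.range N, (-1 : ℝ) ^ i * gbinom (β + 1) i * tpow (t - ((j + i : ℕ) : ℝ)) β := by
    intro j
    rw [fracBspline]
    congr 1
    rw [tsum_eq_sum (s := Finset.range N) ?_]
    · refine Finset.sum_congr rfl fun i _ => ?_
      congr 2
      push_cast; ring
    · intro b hb
      have hb' : N ≤ b := le_of_not_gt (fun h => hb (Finset.mem_range.mpr h))
      have h0 : tpow (t - j - b) β = 0 := by
        have := hz b hb' ((j : ℝ) + b) (by
          have : (0:ℝ) ≤ j := Nat.cast_nonneg j
          linarith)
        rw [show t - ((j:ℝ) + b) = t - j - b by ring] at this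
        exact this
      rw [h0]; ring
  have hR : (∑' j : ℕ, (-1 : ℝ) ^ j * gbinom γ j * fracBspline β (t - j))
      = ∑ j ∈ Finset.range N, (-1 : ℝ) ^ j * gbinom γ j * fracBspline β (t - j) := by
    refine tsum_eq_sum ?_
    intro b hb
    have hb' : N ≤ b := le_of_not_gt (fun h => hb (Finset.mem_range.mpr h))
    have h0 : fracBspline β (t - b) = 0 := by
      rw [hInner b]
      have h1 : ∀ i ∈ Finset.range N,
          (-1 : ℝ) ^ i * gbinom (β + 1) i * tpow (t - ((b + i : ℕ) : ℝ)) β = 0 := by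
        intro i _
        rw [hz (b + i) (le_trans hb' (Nat.le_add_right b i)) ((b + i : ℕ) : ℝ) le_rfl]
        ring
      rw [Finset.sum_congr rfl h1]
      simp
    rw [h0]; ring
  rw [hL, hR]
  simp only [hInner]
  have hβ1 : γ + (β + 1) = α + 1 := by rw [hβ]; ring
  have key : ∑ j ∈ Finset.range N, (-1 : ℝ) ^ j * gbinom γ j *
        ((1 / Real.Gamma (β + 1)) * ∑ i ∈ Finset.range N,
          (-1 : ℝ) ^ i * gbinom (β + 1) i * tpow (t - ((j + i : ℕ) : ℝ)) β)
      = (1 / Real.Gamma (β + 1)) * ∑ p ∈ Finset.range N ×ˢ Finset.range N,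
          (-1 : ℝ) ^ (p.1 + p.2) * (gbinom γ p.1 * gbinom (β + 1) p.2) *
            tpow (t - ((p.1 + p.2 : ℕ) : ℝ)) β := by
    rw [Finset.sum_product]
    simp only [Finset.mul_sum]
    refine Finset.sum_congr rfl fun j _ => Finset.sum_congr rfl fun i _ => ?_
    rw [pow_add]; ring
  rw [key]
  congr 1
  set T : Finset (ℕ × ℕ) := (Finset.range N).biUnion (fun k => Finset.HasAntidiagonal.antidiagonal k) with hT
  have hTsub : T ⊆ Finset.range N ×ˢ Finset.range N := by
    intro p hp
    rw [hT, Finset.mem_biUnion] at hp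
    obtain ⟨k, hk, hpk⟩ := hp
    rw [Finset.HasAntidiagonal.mem_antidiagonal] at hpk
    rw [Finset.mem_range] at hk
    rw [Finset.mem_product, Finset.mem_range, Finset.mem_range]
    omega
  have hstep : ∑ p ∈ Finset.range N ×ˢ Finset.range N,
        (-1 : ℝ) ^ (p.1 + p.2) * (gbinom γ p.1 * gbinom (β + 1) p.2) *
          tpow (t - ((p.1 + p.2 : ℕ) : ℝ)) β
      = ∑ p ∈ T, (-1 : ℝ) ^ (p.1 + p.2) * (gbinom γ p.1 * gbinom (β + 1) p.2) *
          tpow (t - ((p.1 + p.2 : ℕ) : ℝ)) β := by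
    refine (Finset.sum_subset hTsub ?_).symm
    intro p _ hp
    have hps : N ≤ p.1 + p.2 := by
      by_contra h
      push_neg at h
      apply hp
      rw [hT, Finset.mem_biUnion]
      exact ⟨p.1 + p.2, Finset.mem_range.mpr h, Finset.HasAntidiagonal.mem_antidiagonal.mpr rfl⟩
    rw [hz (p.1 + p.2) hps _ le_rfl]
    ring
  have hdisj : ((Finset.range N : Finset ℕ) : Set ℕ).PairwiseDisjoint
      (fun k => (Finset.HasAntidiagonal.antidiagonal k : Finset (ℕ × ℕ))) := by
    intro a _ b _ hab
    simp only [Function.onFun]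
    rw [Finset.disjoint_left]
    intro p hpa hpb
    rw [Finset.HasAntidiagonal.mem_antidiagonal] at hpa hpb
    exact hab (hpa ▸ hpb)
  rw [hstep, hT, Finset.sum_biUnion hdisj]
  refine Finset.sum_congr rfl fun k _ => ?_
  rw [show (α + 1) = γ + (β + 1) from hβ1.symm, gbinom_vandermonde, Finset.mul_sum, Finset.sum_mul]
  refine Finset.sum_congr rfl fun p hp => ?_
  rw [Finset.HasAntidiagonal.mem_antidiagonal] at hp
  rw [hp]
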